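/- Let U be a chi-squared random variable with n degrees of freedom. Then for any c in (0,1), P(U/n ≤ c) ≤ exp(-n((1-c)/2)²). -/

import Mathlib

open MeasureTheory ProbabilityTheory Real
open scoped NNReal ENNReal

lemma aux_log {u : ℝ} (hu : 0 ≤ u) : u - u ^ 2 / 2 ≤ Real.log (1 + u) := by
  have hd : ∀ x : ℝ, 0 ≤ x → HasDerivAt (fun u : ℝ => Real.log (1 + u) - (u - u ^ 2 / 2))
      ((1 + x)⁻¹ * 1 - (1 - 2 * x ^ 1 * 1 / 2)) x := by
    intro x hx
    have h1 : (0:ℝ) < 1 + x := by linarith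
    exact ((Real.hasDerivAt_log h1.ne').comp x (((hasDerivAt_id x).const_add 1))).sub
      ((hasDerivAt_id x).sub (((hasDerivAt_id x).pow 2).div_const 2))
  have h : MonotoneOn (fun u : ℝ => Real.log (1 + u) - (u - u ^ 2 / 2)) (Set.Ici 0) := by
    apply monotoneOn_of_deriv_nonneg (convex_Ici 0)
    · exact fun x hx => ((hd x hx).differentiableAt).continuousAt.continuousWithinAt
    · intro x hx
      rw [interior_Ici] at hx
      exact ((hd x (le_of_lt hx)).differentiableAt).differentiableWithinAt
    · intro x hx
      rw [interior_Ici] at hx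
      have hx' : (0:ℝ) < x := hx
      have h1 : (0:ℝ) < 1 + x := by linarith
      rw [(hd x hx'.le).deriv]
      have : (1 + x)⁻¹ * 1 - (1 - 2 * x ^ 1 * 1 / 2) = x ^ 2 / (1 + x) := by
        field_simp; ring
      rw [this]; positivity
  have := h (Set.self_mem_Ici) hu hu
  simp only [add_zero, Real.log_one, ne_eq, OfNat.ofNat_ne_zero, not_false_eq_true,
    zero_pow, zero_div, sub_zero, sub_self] at this
  linarith [this]

lemma aux_mgf {t : ℝ} (ht : t < 1 / 2) :
    ∫ x, Real.exp (t * x ^ 2) ∂(gaussianReal 0 1) = (Real.sqrt (1 - 2 * t))⁻¹ := by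
  have hpos : 0 < 1 / 2 - t := by linarith
  rw [gaussianReal_of_var_ne_zero 0 one_ne_zero]
  have hden : (gaussianPDF 0 1) = fun x => ((Real.toNNReal (gaussianPDFReal 0 1 x) : ℝ≥0) : ℝ≥0∞) := rfl
  rw [hden, integral_withDensity_eq_integral_smul (measurable_gaussianPDFReal 0 1).real_toNNReal]
  have heq : ∀ x : ℝ, (Real.toNNReal (gaussianPDFReal 0 1 x)) • Real.exp (t * x ^ 2)
      = (Real.sqrt (2 * π))⁻¹ * Real.exp (-(1 / 2 - t) * x ^ 2) := by
    intro x
    rw [NNReal.smul_def, Real.coe_toNNReal _ (gaussianPDFReal_nonneg 0 1 x)]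
    simp only [gaussianPDFReal, NNReal.coe_one, mul_one, sub_zero, smul_eq_mul]
    rw [mul_assoc, ← Real.exp_add]
    congr 1
    ring
  simp_rw [heq]
  rw [MeasureTheory.integral_const_mul, integral_gaussian]
  rw [← Real.sqrt_inv, ← Real.sqrt_mul (by positivity)]
  have hπ : π ≠ 0 := Real.pi_ne_zero
  have h3 : (1:ℝ) / 2 - t ≠ 0 := by linarith
  rw [show (2 * π)⁻¹ * (π / (1 / 2 - t)) = (1 - 2 * t)⁻¹ by
    apply eq_inv_of_mul_eq_one_left
    have key : (1 - 2*t) * ((2*π)⁻¹ * (π/(1/2-t))) = (π⁻¹ * π) * ((1/2 - t) * (1/2-t)⁻¹) := by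
      rw [div_eq_mul_inv, mul_inv]; ring
    rw [mul_comm, key, inv_mul_cancel₀ hπ, mul_inv_cancel₀ h3, one_mul]]
  exact Real.sqrt_inv _

/-- Let `U` be a chi-squared random variable with `n` degrees of freedom, i.e. the sum of
squares of `n` i.i.d. standard Gaussians. Then for any `c ∈ (0,1)`,
`P(U/n ≤ c) ≤ exp (-n ((1-c)/2)²)`. -/
theorem chi_squared_lower_tail_bound
    {Ω : Type*} [MeasurableSpace Ω] (P : Measure Ω) [IsProbabilityMeasure P]
    (n : ℕ) (hn : 0 < n) (X : Fin n → Ω → ℝ)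
    (hmeas : ∀ i, Measurable (X i))
    (hindep : iIndepFun X P)
    (hgauss : ∀ i, Measure.map (X i) P = gaussianReal 0 1)
    (c : ℝ) (hc : c ∈ Set.Ioo (0 : ℝ) 1) :
    P {ω | (∑ i, (X i ω) ^ 2) / n ≤ c} ≤
      ENNReal.ofReal (Real.exp (-(n : ℝ) * ((1 - c) / 2) ^ 2)) := by
  obtain ⟨hc0, hc1⟩ := hc
  set u : ℝ := 1 - c with hu_def
  have hu0 : 0 < u := by simp only [hu_def]; linarith
  have hu1 : u < 1 := by simp only [hu_def]; linarith
  set t : ℝ := -(u / 2) with ht_def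
  have ht : t ≤ 0 := by simp only [ht_def]; linarith
  have ht2 : t < 1 / 2 := by simp only [ht_def]; linarith
  set Y : Fin n → Ω → ℝ := fun i ω => X i ω ^ 2 with hY
  have hYmeas : ∀ i, Measurable (Y i) := fun i => (hmeas i).pow_const 2
  have hYindep : iIndepFun Y P :=
    hindep.comp (fun _ x => x ^ 2) (fun _ => measurable_id.pow_const 2)
  set S : Ω → ℝ := fun ω => ∑ i, Y i ω with hS_def
  have hSeq : (∑ i, Y i) = S := by
    funext ω; rw [Finset.sum_apply]
  have hsum : ∀ ω, (∑ i, X i ω ^ 2) = S ω := fun ω => rfl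
  have hSmeas : Measurable S := Finset.measurable_sum _ (fun i _ => hYmeas i)
  have hnpos : (0:ℝ) < n := Nat.cast_pos.mpr hn
  have hset : {ω | (∑ i, (X i ω) ^ 2) / n ≤ c} = {ω | S ω ≤ c * n} := by
    ext ω
    simp only [Set.mem_setOf_eq, ← hsum, div_le_iff₀ hnpos]
  have hsumnonneg : ∀ ω, 0 ≤ S ω := by
    intro ω
    rw [← hsum ω]
    exact Finset.sum_nonneg fun i _ => sq_nonneg _
  have hint : Integrable (fun ω => Real.exp (t * S ω)) P := by
    apply Integrable.mono' (integrable_const (1:ℝ))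
    · exact ((hSmeas.const_mul t).exp).aestronglyMeasurable
    · filter_upwards with ω
      rw [Real.norm_eq_abs, Real.abs_exp, Real.exp_le_one_iff]
      exact mul_nonpos_of_nonpos_of_nonneg ht (hsumnonneg ω)
  have hcher := measure_le_le_exp_mul_mgf (μ := P) (X := S) (c * n) ht hint
  have hmgf1 : ∀ i : Fin n, mgf (Y i) P t = (Real.sqrt (1 + u))⁻¹ := by
    intro i
    have hmap : ∫ x, Real.exp (t * x ^ 2) ∂(Measure.map (X i) P)
        = ∫ ω, Real.exp (t * (X i ω) ^ 2) ∂P :=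
      integral_map (hmeas i).aemeasurable
        ((measurable_id.pow_const 2).const_mul t).exp.aestronglyMeasurable
    have h12 : 1 - 2 * t = 1 + u := by rw [ht_def]; ring
    simp only [mgf, hY]
    rw [← hmap, hgauss i, aux_mgf ht2, h12]
  have hmgf : mgf S P t = ((Real.sqrt (1 + u))⁻¹) ^ n := by
    rw [← hSeq, hYindep.mgf_sum hYmeas]
    simp [hmgf1]
  rw [hmgf] at hcher
  have hfinal : Real.exp (-t * (c * n)) * ((Real.sqrt (1 + u))⁻¹) ^ n
      ≤ Real.exp (-(n : ℝ) * ((1 - c) / 2) ^ 2) := by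
    have h1u : (0:ℝ) < 1 + u := by linarith
    have hs : (0:ℝ) < (Real.sqrt (1 + u))⁻¹ := by positivity
    have hpow : ((Real.sqrt (1 + u))⁻¹) ^ n
        = Real.exp ((n : ℝ) * (-(Real.log (1 + u) / 2))) := by
      rw [← Real.exp_log (pow_pos hs n), Real.log_pow, Real.log_inv,
        Real.log_sqrt h1u.le]
    rw [hpow, ← Real.exp_add, Real.exp_le_exp]
    have hlog := aux_log hu0.le
    have hkey := mul_le_mul_of_nonneg_left hlog (by positivity : (0:ℝ) ≤ (n:ℝ) / 2)
    have hcu : c = 1 - u := by rw [hu_def]; ring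
    rw [ht_def, hcu]
    nlinarith [hkey]
  rw [hset]
  calc P {ω | S ω ≤ c * n}
      = ENNReal.ofReal (P {ω | S ω ≤ c * n}).toReal :=
        (ENNReal.ofReal_toReal (measure_ne_top _ _)).symm
    _ ≤ ENNReal.ofReal (Real.exp (-(n : ℝ) * ((1 - c) / 2) ^ 2)) :=
        ENNReal.ofReal_le_ofReal (hcher.trans hfinal)
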